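/- For all nonzero rational numbers a, b, c and any rational x, y, z, setting x = X/(a⁸b¹⁰c¹²), y = -Y/(a⁵b⁷c⁸), z = -Z/(a³b⁴c⁵), the equation a x² + b y³ + c z⁵ = d is equivalent to X² - Y³ - Z⁵ = a¹⁵ b²⁰ c²⁴ d. -/

import Mathlib

/-- For nonzero rationals a, b, c, setting x = X/(a⁸b¹⁰c¹²), y = -Y/(a⁵b⁷c⁸),
z = -Z/(a³b⁴c⁵), the equation ax² + by³ + cz⁵ = d is equivalent to
X² - Y³ - Z⁵ = a¹⁵b²⁰c²⁴d. -/
theorem stmt_15 (a b c d : ℚ) (ha : a ≠ 0) (hb : b ≠ 0) (hc : c ≠ 0)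
    (X Y Z : ℚ) :
    let x : ℚ := X / (a ^ 8 * b ^ 10 * c ^ 12)
    let y : ℚ := -Y / (a ^ 5 * b ^ 7 * c ^ 8)
    let z : ℚ := -Z / (a ^ 3 * b ^ 4 * c ^ 5)
    (a * x ^ 2 + b * y ^ 3 + c * z ^ 5 = d) ↔
    (X ^ 2 - Y ^ 3 - Z ^ 5 = a ^ 15 * b ^ 20 * c ^ 24 * d) := by
  intro x y z
  simp only [x, y, z]
  have hD : (a ^ 31 * b ^ 41 * c ^ 49 : ℚ) ≠ 0 :=
    mul_ne_zero (mul_ne_zero (pow_ne_zero _ ha) (pow_ne_zero _ hb)) (pow_ne_zero _ hc)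
  field_simp
  constructor
  · intro h
    apply mul_left_cancel₀ hD
    linear_combination (a ^ 31 * b ^ 41 * c ^ 49) * h
  · intro h
    linear_combination h
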